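/- arXiv:0709.2184 — 3 statements merged into one kernel-verified Lean document; each statement's English description precedes it below -/
import Mathlib

section
/- Let g : ℝ → ℝ be any function with g(x) = o(x / log x) as x → ∞, i.e., lim_{x→∞} g(x)·(log x)/x = 0. Then for infinitely many positive integers n one has π(n) ≥ g(n). -/
lemma cheb_aux (n : ℕ) (hn : 0 < n) :
    4 ^ n ≤ (2 * n) ^ (Nat.primeCounting (2 * n) + 1) := by
  have h1 := Nat.four_pow_le_two_mul_self_mul_centralBinom n hn
  have h2 : Nat.centralBinom n ≤ (2 * n) ^ Nat.primeCounting (2 * n) := by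
    have hx : (∏ p ∈ (2 * n + 1).primesBelow, p ^ (Nat.centralBinom n).factorization p)
        = ∏ p ∈ Finset.range (2 * n + 1), p ^ (Nat.centralBinom n).factorization p := by
      refine Finset.prod_subset (Finset.filter_subset _ _) ?_
      intro p hp hnp
      have hnotp : ¬ p.Prime := by
        intro hpp
        exact hnp (Nat.mem_primesBelow.mpr ⟨Finset.mem_range.mp hp, hpp⟩)
      rw [Nat.factorization_eq_zero_of_not_prime _ hnotp, pow_zero]
    have hprod : Nat.centralBinom n
        = ∏ p ∈ (2 * n + 1).primesBelow, p ^ (Nat.centralBinom n).factorization p := by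
      rw [hx]; exact (Nat.prod_pow_factorization_centralBinom n).symm
    have hcard : (2 * n + 1).primesBelow.card = Nat.primeCounting (2 * n) := by
      rw [Nat.primesBelow_card_eq_primeCounting']
      rfl
    rw [hprod, ← hcard]
    refine Finset.prod_le_pow_card _ _ _ ?_
    intro p hp
    have := @Nat.pow_factorization_choose_le p (2 * n) n (by positivity)
    rwa [Nat.centralBinom]
  calc 4 ^ n ≤ 2 * n * Nat.centralBinom n := h1
    _ ≤ 2 * n * (2 * n) ^ Nat.primeCounting (2 * n) := Nat.mul_le_mul_left _ h2
    _ = (2 * n) ^ (Nat.primeCounting (2 * n) + 1) := by rw [pow_succ, mul_comm]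

/-- If `g(x) = o(x / log x)` as `x → ∞`, then `π(n) ≥ g(n)` for infinitely
many positive integers `n`. -/
theorem pi_ge_g_infinitely_often (g : ℝ → ℝ)
    (hg : Filter.Tendsto (fun x : ℝ => g x * Real.log x / x) Filter.atTop (nhds 0)) :
    ∀ N : ℕ, ∃ n : ℕ, N ≤ n ∧ 0 < n ∧ g n ≤ Nat.primeCounting n := by
  intro N
  have δpos : (0:ℝ) < Real.log 2 / 2 := by positivity
  have hev : ∀ᶠ x in Filter.atTop, |g x * Real.log x / x| < Real.log 2 / 2 := by
    have := hg (Metric.ball_mem_nhds (0:ℝ) δpos)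
    rw [Filter.mem_map] at this
    filter_upwards [this] with x hx
    simp only [Set.mem_preimage, Metric.mem_ball, Real.dist_eq, sub_zero] at hx
    exact hx
  obtain ⟨X, hX⟩ := Filter.eventually_atTop.mp hev
  set m : ℕ := max N (max ⌈X⌉₊ 17) with hm
  have hmN : N ≤ m := le_max_left _ _
  have hm17 : 17 ≤ m := le_trans (le_max_right _ _) (le_max_right _ _)
  have hmX : X ≤ (m:ℝ) := le_trans (Nat.le_ceil X)
    ((Nat.cast_le (α := ℝ)).mpr (le_trans (le_max_left _ _) (le_max_right _ _)))
  refine ⟨2 * m, by omega, by omega, ?_⟩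
  have hmpos : 0 < m := by omega
  -- positivity of log (2m)
  have h2m : (1:ℝ) < (2 * m : ℕ) := by
    exact_mod_cast (by omega : 1 < 2 * m)
  set L : ℝ := Real.log ((2 * m : ℕ) : ℝ) with hL
  have hLpos : 0 < L := Real.log_pos h2m
  -- log bound: L ≤ m * log 2
  have hLle : L ≤ (m:ℝ) * Real.log 2 := by
    have h2pow : (2 * m : ℕ) ≤ 2 ^ m := by
      have := @Nat.lt_two_pow_self (m - 1)
      have h2 : 2 * m ≤ 2 * 2 ^ (m - 1) := by omega
      calc 2 * m ≤ 2 * 2 ^ (m - 1) := h2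
        _ = 2 ^ (m - 1 + 1) := by rw [pow_succ, mul_comm]
        _ = 2 ^ m := by congr 1; omega
    calc L ≤ Real.log ((2:ℝ) ^ m) := by
            apply Real.log_le_log (by positivity)
            exact_mod_cast h2pow
      _ = (m:ℝ) * Real.log 2 := by rw [Real.log_pow]
  -- Chebyshev: (π(2m)+1) * L ≥ 2 m log 2
  have hcheb : 2 * (m:ℝ) * Real.log 2 ≤ ((Nat.primeCounting (2 * m) : ℝ) + 1) * L := by
    have h1 : ((4:ℝ)) ^ m ≤ ((2 * m : ℕ) : ℝ) ^ (Nat.primeCounting (2 * m) + 1) := by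
      exact_mod_cast cheb_aux m hmpos
    have h2 := Real.log_le_log (by positivity) h1
    rw [Real.log_pow, Real.log_pow] at h2
    have h4 : Real.log 4 = 2 * Real.log 2 := by
      rw [show (4:ℝ) = 2 ^ 2 by norm_num, Real.log_pow]; push_cast; ring
    rw [h4] at h2
    push_cast at h2
    rw [hL]
    push_cast
    nlinarith [h2]
  -- bound on g at 2m
  have hgx : |g ((2 * m : ℕ) : ℝ)| * L / ((2 * m : ℕ) : ℝ) < Real.log 2 / 2 := by
    have := hX ((2 * m : ℕ) : ℝ) (by
      calc X ≤ (m:ℝ) := hmX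
        _ ≤ ((2 * m : ℕ) : ℝ) := by push_cast; nlinarith [Nat.cast_nonneg (α := ℝ) m])
    rw [abs_div, abs_mul] at this
    rwa [abs_of_pos hLpos, abs_of_pos (by positivity : (0:ℝ) < ((2 * m : ℕ) : ℝ))] at this
  have h2mpos : (0:ℝ) < ((2 * m : ℕ) : ℝ) := by positivity
  have hgle : g ((2 * m : ℕ) : ℝ) < Real.log 2 / 2 * ((2 * m : ℕ) : ℝ) / L := by
    have h1 : |g ((2 * m : ℕ) : ℝ)| < Real.log 2 / 2 * ((2 * m : ℕ) : ℝ) / L := by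
      rw [div_lt_iff₀ h2mpos] at hgx
      rw [lt_div_iff₀ hLpos]
      nlinarith [hgx]
    calc g ((2 * m : ℕ) : ℝ) ≤ |g ((2 * m : ℕ) : ℝ)| := le_abs_self _
      _ < _ := h1
  -- finish: log2/2 * 2m / L ≤ π(2m)
  have hfinal : Real.log 2 / 2 * ((2 * m : ℕ) : ℝ) / L ≤ (Nat.primeCounting (2 * m) : ℝ) := by
    rw [div_le_iff₀ hLpos]
    have hcast : ((2 * m : ℕ) : ℝ) = 2 * (m:ℝ) := by push_cast; ring
    rw [hcast]
    nlinarith [hcheb, hLle, hLpos]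
  exact le_of_lt (lt_of_lt_of_le hgle hfinal)
end

section
/- For every real number t ≥ 1, the product over all primes p with p > t of (1 + 1/(p² − 1)) is at most exp(1/t² + 1/t). -/
set_option maxHeartbeats 1000000

private noncomputable def aaux (n : ℕ) : ℝ := (1 / ((n : ℝ) - 1) + 1 / (n : ℝ)) / 2

private lemma aaux_nonneg {n : ℕ} (hn : 2 ≤ n) : 0 ≤ aaux n := by
  have h1 : (2 : ℝ) ≤ (n : ℝ) := by exact_mod_cast hn
  have : (0:ℝ) < (n:ℝ) - 1 := by linarith
  have : (0:ℝ) < (n:ℝ) := by linarith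
  unfold aaux
  positivity

private lemma term_eq {n : ℕ} (hn : 2 ≤ n) :
    1 / ((n : ℝ) ^ 2 - 1) = aaux n - aaux (n + 1) := by
  have h1 : (2 : ℝ) ≤ (n : ℝ) := by exact_mod_cast hn
  have h2 : (n:ℝ) - 1 ≠ 0 := by linarith
  have h3 : (n:ℝ) ≠ 0 := by linarith
  have h4 : (n:ℝ) + 1 ≠ 0 := by linarith
  have h5 : (n:ℝ) ^ 2 - 1 ≠ 0 := by nlinarith
  unfold aaux
  push_cast
  field_simp
  rw [add_sub_cancel_right]
  field_simp
  ring

private lemma telescope (m : ℕ) (hm : 2 ≤ m) (N : ℕ) :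
    ∑ n ∈ Finset.Ico m N, (1 / ((n : ℝ) ^ 2 - 1)) ≤ aaux m := by
  rcases le_or_gt m N with h | h
  · have key : ∀ N, m ≤ N → ∑ n ∈ Finset.Ico m N, (1 / ((n : ℝ) ^ 2 - 1)) = aaux m - aaux N := by
      intro N hN
      induction N, hN using Nat.le_induction with
      | base => simp
      | succ N hN ih =>
          rw [Finset.sum_Ico_succ_top hN, ih, term_eq (le_trans hm hN)]
          ring
    rw [key N h]
    have := aaux_nonneg (le_trans hm h)
    linarith
  · rw [Finset.Ico_eq_empty (by omega)]
    simpa using aaux_nonneg hm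

/-- For every real `t ≥ 1`, `∏_{p prime, p > t} (1 + 1/(p² − 1)) ≤
exp(1/t² + 1/t)`. -/
theorem prod_primes_gt_le_exp (t : ℝ) (ht : 1 ≤ t) :
    (∏' p : {p : ℕ // p.Prime ∧ t < (p : ℝ)}, (1 + 1 / ((p : ℝ) ^ 2 - 1)))
      ≤ Real.exp (1 / t ^ 2 + 1 / t) := by
  have ht0 : (0:ℝ) < t := by linarith
  have hrhs : (0:ℝ) ≤ 1 / t ^ 2 + 1 / t := by positivity
  obtain hmul | hmul := Classical.em (Multipliable (fun p : {p : ℕ // p.Prime ∧ t < (p : ℝ)} => (1 + 1 / ((p : ℝ) ^ 2 - 1))))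
  · refine le_of_tendsto' hmul.hasProd fun s => ?_
    -- step 1: bound product by exp of sum
    have hexp : ∀ p : {p : ℕ // p.Prime ∧ t < (p : ℝ)}, (1 + 1 / ((p : ℝ) ^ 2 - 1)) ≤ Real.exp (1 / ((p : ℝ) ^ 2 - 1)) := by
      intro p
      have := Real.add_one_le_exp (1 / ((p : ℝ) ^ 2 - 1))
      linarith
    have step1 : ∏ p ∈ s, (1 + 1 / ((p : ℝ) ^ 2 - 1))
        ≤ Real.exp (∑ p ∈ s, 1 / ((p : ℝ) ^ 2 - 1)) := by
      rw [Real.exp_sum]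
      refine Finset.prod_le_prod (fun p _ => ?_) (fun p _ => hexp p)
      have hp2 : 2 ≤ (p : ℕ) := p.2.1.two_le
      have h2 : (2:ℝ) ≤ ((p : ℕ) : ℝ) := by exact_mod_cast hp2
      have : (1:ℝ) ≤ (p : ℝ) ^ 2 - 1 := by nlinarith
      positivity
    refine step1.trans (Real.exp_le_exp.mpr ?_)
    -- step 2: bound the finite sum
    set k : ℕ := ⌊t⌋₊ with hk
    have hk1 : 1 ≤ k := Nat.le_floor (by exact_mod_cast ht)
    have htk : t < (k : ℝ) + 1 := Nat.lt_floor_add_one t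
    set m : ℕ := k + 1 with hmdef
    have hm2 : 2 ≤ m := by omega
    -- each p ∈ s satisfies m ≤ p
    have hmem : ∀ p : {p : ℕ // p.Prime ∧ t < (p : ℝ)}, m ≤ (p : ℕ) := by
      intro p
      have : k < (p : ℕ) := (Nat.floor_lt ht0.le).mpr p.2.2
      omega
    -- map to a sum over Ico
    set N : ℕ := (s.image (fun p : {p : ℕ // p.Prime ∧ t < (p : ℝ)} => (p : ℕ))).sup id + 1 with hN
    have hsub : s.image (fun p : {p : ℕ // p.Prime ∧ t < (p : ℝ)} => (p : ℕ)) ⊆ Finset.Ico m N := by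
      intro n hn
      simp only [Finset.mem_image] at hn
      obtain ⟨p, hps, rfl⟩ := hn
      refine Finset.mem_Ico.mpr ⟨hmem p, ?_⟩
      have : (p : ℕ) ≤ (s.image (fun p : {p : ℕ // p.Prime ∧ t < (p : ℝ)} => (p : ℕ))).sup id :=
        Finset.le_sup (f := id) (Finset.mem_image_of_mem _ hps)
      omega
    have hinj : Set.InjOn (fun p : {p : ℕ // p.Prime ∧ t < (p : ℝ)} => (p : ℕ)) s := fun a _ b _ h => Subtype.ext h
    have himg : ∑ p ∈ s, 1 / ((p : ℝ) ^ 2 - 1)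
        = ∑ n ∈ s.image (fun p : {p : ℕ // p.Prime ∧ t < (p : ℝ)} => (p : ℕ)), 1 / ((n : ℝ) ^ 2 - 1) :=
      (Finset.sum_image (f := fun n : ℕ => 1 / ((n:ℝ) ^ 2 - 1)) (fun a ha b hb h => hinj ha hb h)).symm
    have hbound : ∑ n ∈ s.image (fun p : {p : ℕ // p.Prime ∧ t < (p : ℝ)} => (p : ℕ)), 1 / ((n : ℝ) ^ 2 - 1)
        ≤ ∑ n ∈ Finset.Ico m N, 1 / ((n : ℝ) ^ 2 - 1) := by
      refine Finset.sum_le_sum_of_subset_of_nonneg hsub fun n hn _ => ?_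
      have hn2 : 2 ≤ n := le_trans hm2 (Finset.mem_Ico.mp hn).1
      have h2 : (2:ℝ) ≤ (n : ℝ) := by exact_mod_cast hn2
      have : (1:ℝ) ≤ (n : ℝ) ^ 2 - 1 := by nlinarith
      positivity
    have hfinal : aaux m ≤ 1 / t ^ 2 + 1 / t := by
      have hK : (1:ℝ) ≤ (k : ℝ) := by exact_mod_cast hk1
      have hmcast : ((m : ℕ) : ℝ) = (k : ℝ) + 1 := by push_cast [hmdef]; ring
      unfold aaux
      rw [hmcast]
      have hKpos : (0:ℝ) < (k : ℝ) := by linarith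
      have hK1pos : (0:ℝ) < (k : ℝ) + 1 := by linarith
      have ht1 : 1 / ((k:ℝ) + 1) ≤ 1 / t := by
        apply one_div_le_one_div_of_le ht0 htk.le
      have ht2 : 1 / ((k:ℝ) + 1) ^ 2 ≤ 1 / t ^ 2 := by
        apply one_div_le_one_div_of_le (by positivity)
        nlinarith
      have hkey : ((k:ℝ) + 1 - 1)⁻¹ / 2 + ((k:ℝ) + 1)⁻¹ / 2
          ≤ 1 / ((k:ℝ) + 1) ^ 2 + 1 / ((k:ℝ) + 1) := by
        rw [← add_div, div_le_iff₀ (by norm_num : (0:ℝ) < 2)]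
        have e1 : ((k:ℝ) + 1 - 1)⁻¹ = 1 / (k:ℝ) := by rw [one_div]; ring_nf
        rw [e1, inv_eq_one_div]
        rw [div_add_div _ _ (ne_of_gt hKpos) (ne_of_gt hK1pos)]
        rw [div_add_div _ _ (by positivity : ((k:ℝ)+1)^2 ≠ 0) (ne_of_gt hK1pos)]
        rw [div_mul_eq_mul_div, div_le_div_iff₀ (by positivity) (by positivity)]
        nlinarith
      calc (1 / ((k:ℝ) + 1 - 1) + 1 / ((k:ℝ) + 1)) / 2
          = ((k:ℝ) + 1 - 1)⁻¹ / 2 + ((k:ℝ) + 1)⁻¹ / 2 := by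
            rw [one_div, one_div]; ring
        _ ≤ 1 / ((k:ℝ) + 1) ^ 2 + 1 / ((k:ℝ) + 1) := hkey
        _ ≤ 1 / t ^ 2 + 1 / t := by linarith
    calc ∑ p ∈ s, 1 / ((p : ℝ) ^ 2 - 1)
        = ∑ n ∈ s.image (fun p : {p : ℕ // p.Prime ∧ t < (p : ℝ)} => (p : ℕ)), 1 / ((n : ℝ) ^ 2 - 1) := himg
      _ ≤ ∑ n ∈ Finset.Ico m N, 1 / ((n : ℝ) ^ 2 - 1) := hbound
      _ ≤ aaux m := telescope m hm2 N
      _ ≤ 1 / t ^ 2 + 1 / t := hfinal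
  · rw [tprod_eq_one_of_not_multipliable hmul]
    exact Real.one_le_exp hrhs
end

section
/- Define a sequence of real numbers by a₂ = e and a_{n+1} = a_n + log a_n for n ≥ 2. Then for every integer n ≥ 2 one has n ≤ a_n, n·log n − n + 1 < a_n (for n ≥ 3), and a_n ≤ 2n·log n. -/
open Real

/-- The sequence `a₂ = e`, `a_{n+1} = a_n + log a_n`, reindexed so that
`seqA k = a_{k+2}`. -/
noncomputable def seqA : ℕ → ℝ
  | 0 => Real.exp 1
  | k + 1 => seqA k + Real.log (seqA k)

lemma seqA_succ (k : ℕ) : seqA (k + 1) = seqA k + Real.log (seqA k) := rfl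

lemma seqA_zero : seqA 0 = Real.exp 1 := rfl

/-- `a_n ≥ e` and `a_n ≥ n` for all `n ≥ 2`. -/
lemma seqA_ge : ∀ k : ℕ, Real.exp 1 ≤ seqA k ∧ ((k : ℝ) + 2) ≤ seqA k := by
  intro k
  induction k with
  | zero =>
    refine ⟨le_refl _, ?_⟩
    have := Real.exp_one_gt_d9
    rw [seqA_zero]; push_cast; linarith
  | succ k ih =>
    have h1 : (1 : ℝ) ≤ Real.log (seqA k) := by
      have := Real.log_le_log (Real.exp_pos 1) ih.1
      rwa [Real.log_exp] at this
    rw [seqA_succ]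
    constructor
    · linarith [ih.1]
    · push_cast; linarith [ih.2]

lemma seqA_pos (k : ℕ) : 0 < seqA k := lt_of_lt_of_le (Real.exp_pos 1) (seqA_ge k).1

/-- `log n ≤ n/2 + 1` for `n > 0`. -/
lemma log_le_half_add_one {x : ℝ} (hx : 0 < x) : Real.log x ≤ x / 2 + 1 := by
  rw [Real.log_le_iff_le_exp hx]
  have h1 : x / 2 + 1 ≤ Real.exp (x / 2) := Real.add_one_le_exp _
  have h2 : Real.exp (x / 2 + 1) = Real.exp 1 * Real.exp (x / 2) := by
    rw [← Real.exp_add]; ring_nf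
  have h3 : (2 : ℝ) ≤ Real.exp 1 := by linarith [Real.exp_one_gt_d9]
  have h4 : 0 < Real.exp (x / 2) := Real.exp_pos _
  nlinarith

/-- Upper bound: `a_n ≤ 2 n log n`. -/
lemma seqA_upper : ∀ k : ℕ, seqA k ≤ 2 * ((k : ℝ) + 2) * Real.log ((k : ℝ) + 2) := by
  intro k
  induction k with
  | zero =>
    rw [seqA_zero]
    have h1 := Real.log_two_gt_d9
    have h2 := Real.exp_one_lt_d9
    push_cast
    norm_num
    linarith
  | succ k ih =>
    set n : ℝ := (k : ℝ) + 2 with hn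
    have hn2 : (2 : ℝ) ≤ n := by have : (0:ℝ) ≤ (k:ℝ) := Nat.cast_nonneg k; linarith
    have hnpos : (0 : ℝ) < n := by linarith
    have hlogn : 0 < Real.log n := Real.log_pos (by linarith)
    have hkey : 2 * n * Real.log n ≤ (n + 1) ^ 2 := by
      have := log_le_half_add_one hnpos
      nlinarith
    have hstep : Real.log (seqA k) ≤ 2 * Real.log (n + 1) := by
      have h1 : Real.log (seqA k) ≤ Real.log (2 * n * Real.log n) := by
        apply Real.log_le_log (seqA_pos k) ih
      have h2 : Real.log (2 * n * Real.log n) ≤ Real.log ((n + 1) ^ 2) := by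
        apply Real.log_le_log (by positivity) hkey
      have h3 : Real.log ((n + 1) ^ 2) = 2 * Real.log (n + 1) := by
        rw [Real.log_pow]; push_cast; ring
      linarith
    have hmono : Real.log n ≤ Real.log (n + 1) := Real.log_le_log hnpos (by linarith)
    rw [seqA_succ]
    have : ((k : ℝ) + 1) + 2 = n + 1 := by rw [hn]; ring
    push_cast
    rw [show ((k : ℝ) + 1) + 2 = n + 1 by rw [hn]; ring]
    nlinarith

/-- `a_n ≥ n + 1` for `n ≥ 5`, i.e. `seqA k ≥ k + 3` for `k ≥ 3`. -/
lemma seqA_ge_add_three : ∀ k : ℕ, 3 ≤ k → ((k : ℝ) + 3) ≤ seqA k := by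
  intro k hk
  induction k with
  | zero => omega
  | succ k ih =>
    rcases Nat.lt_or_ge k 3 with h | h
    · -- k + 1 = 3, so k = 2 : show 6 ≤ seqA 3
      interval_cases k
      · omega
      · omega
      · -- seqA 3 ≥ 6
        have he := Real.exp_one_gt_d9
        have hl2 := Real.log_two_gt_d9
        have h1 : seqA 1 = Real.exp 1 + 1 := by
          rw [seqA_succ, seqA_zero, Real.log_exp]
        have h2 : Real.exp 1 + 2 ≤ seqA 2 := by
          rw [seqA_succ, h1]
          have : (1 : ℝ) ≤ Real.log (Real.exp 1 + 1) := by
            have := Real.log_le_log (Real.exp_pos 1) (by linarith : Real.exp 1 ≤ Real.exp 1 + 1)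
            rwa [Real.log_exp] at this
          linarith
        have h3 : 2 * Real.log 2 ≤ Real.log (seqA 2) := by
          have h4 : Real.log 4 ≤ Real.log (seqA 2) :=
            Real.log_le_log (by norm_num) (by linarith)
          have : Real.log 4 = 2 * Real.log 2 := by
            rw [show (4 : ℝ) = 2 ^ 2 by norm_num, Real.log_pow]; push_cast; ring
          linarith
        have h5 : seqA 3 = seqA 2 + Real.log (seqA 2) := seqA_succ 2
        push_cast
        linarith
    · have ih' := ih h
      have h1 : (1 : ℝ) ≤ Real.log (seqA k) := by
        have := Real.log_le_log (Real.exp_pos 1) (seqA_ge k).1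
        rwa [Real.log_exp] at this
      rw [seqA_succ]
      push_cast
      linarith

/-- Key step inequality: `n * (log (n+1) - log n) ≤ 1` for `n ≥ 1`. -/
lemma key_log_ineq {n : ℝ} (hn : 1 ≤ n) : n * (Real.log (n + 1) - Real.log n) ≤ 1 := by
  have hnpos : (0 : ℝ) < n := by linarith
  have h1 : Real.log (n + 1) - Real.log n = Real.log ((n + 1) / n) := by
    rw [Real.log_div (by linarith) (by linarith)]
  have h2 : Real.log ((n + 1) / n) ≤ (n + 1) / n - 1 :=
    Real.log_le_sub_one_of_pos (by positivity)
  have h3 : (n + 1) / n - 1 = 1 / n := by field_simp; ring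
  rw [h1]
  have h4 : Real.log ((n + 1) / n) ≤ 1 / n := by linarith
  calc n * Real.log ((n + 1) / n) ≤ n * (1 / n) := by
        apply mul_le_mul_of_nonneg_left h4 (le_of_lt hnpos)
    _ = 1 := by field_simp

/-- Lower bound: `n log n - n + 1 < a_n` for `n ≥ 3`, i.e. for `k ≥ 1`. -/
lemma seqA_lower : ∀ k : ℕ, 1 ≤ k →
    ((k : ℝ) + 2) * Real.log ((k : ℝ) + 2) - ((k : ℝ) + 2) + 1 < seqA k := by
  intro k hk
  induction k with
  | zero => omega
  | succ k ih =>
    have he := Real.exp_one_gt_d9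
    have hl2 := Real.log_two_gt_d9
    have hl2' := Real.log_two_lt_d9
    have h1 : seqA 1 = Real.exp 1 + 1 := by rw [seqA_succ, seqA_zero, Real.log_exp]
    rcases Nat.lt_or_ge k 3 with h | h
    · interval_cases k
      · -- n = 3 : 3 log 3 - 2 < seqA 1 = e + 1
        have h3 : Real.log 3 ≤ 2 * Real.log 2 := by
          have h4 : Real.log 3 ≤ Real.log 4 := Real.log_le_log (by norm_num) (by norm_num)
          have : Real.log 4 = 2 * Real.log 2 := by
            rw [show (4 : ℝ) = 2 ^ 2 by norm_num, Real.log_pow]; push_cast; ring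
          linarith
        push_cast
        rw [h1]
        norm_num
        nlinarith
      · -- n = 4 : 4 log 4 - 3 < seqA 2 ≥ e + 2
        have h2 : Real.exp 1 + 2 ≤ seqA 2 := by
          rw [seqA_succ, h1]
          have : (1 : ℝ) ≤ Real.log (Real.exp 1 + 1) := by
            have := Real.log_le_log (Real.exp_pos 1) (by linarith : Real.exp 1 ≤ Real.exp 1 + 1)
            rwa [Real.log_exp] at this
          linarith
        have h4 : Real.log 4 = 2 * Real.log 2 := by
          rw [show (4 : ℝ) = 2 ^ 2 by norm_num, Real.log_pow]; push_cast; ring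
        push_cast
        norm_num
        rw [h4]
        nlinarith
      · -- n = 5 : 5 log 5 - 4 < seqA 3 ≥ 6
        have h6 : ((3 : ℕ) : ℝ) + 3 ≤ seqA 3 := seqA_ge_add_three 3 (by norm_num)
        have h5 : Real.log 5 < 2 := by
          rw [show (2 : ℝ) = Real.log (Real.exp 1 * Real.exp 1) by
            rw [← Real.exp_add, Real.log_exp]; norm_num]
          apply Real.log_lt_log (by norm_num)
          nlinarith
        push_cast at h6 ⊢
        norm_num
        nlinarith
    · -- inductive step, k ≥ 3
      have ih' := ih (by omega)
      set n : ℝ := (k : ℝ) + 2 with hndef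
      have hn1 : (1 : ℝ) ≤ n := by have : (0:ℝ) ≤ (k:ℝ) := Nat.cast_nonneg k; linarith
      have hge : n + 1 ≤ seqA k := by
        have := seqA_ge_add_three k h
        push_cast at this ⊢
        linarith
    -- log (seqA k) ≥ log (n+1)
      have hlog : Real.log (n + 1) ≤ Real.log (seqA k) :=
        Real.log_le_log (by linarith) hge
      have hkey := key_log_ineq hn1
      rw [seqA_succ]
      push_cast
      rw [show ((k : ℝ) + 1) + 2 = n + 1 by rw [hndef]; ring]
      nlinarith

/-- For the sequence `a₂ = e`, `a_{n+1} = a_n + log a_n`, one has for all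
`n ≥ 2`: `n ≤ a_n`, `n log n − n + 1 < a_n` for `n ≥ 3`, and `a_n ≤ 2 n log n`. -/
theorem seqA_bounds (n : ℕ) (hn : 2 ≤ n) :
    (n : ℝ) ≤ seqA (n - 2) ∧
      (3 ≤ n → (n : ℝ) * Real.log n - n + 1 < seqA (n - 2)) ∧
      seqA (n - 2) ≤ 2 * n * Real.log n := by
  obtain ⟨m, rfl⟩ : ∃ m, n = m + 2 := ⟨n - 2, by omega⟩
  have hsub : m + 2 - 2 = m := by omega
  rw [hsub]
  refine ⟨?_, ?_, ?_⟩
  · have := (seqA_ge m).2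
    push_cast
    linarith
  · intro h3
    have hm1 : 1 ≤ m := by omega
    have := seqA_lower m hm1
    push_cast at this ⊢
    linarith
  · have := seqA_upper m
    push_cast at this ⊢
    linarith
end
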